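/- Second-order truncation error of the discrete Dyson series: let U_n be the sum over all (j_1,...,j_n) ∈ {0,1,2}^n of products of factors e^{-iH_0Δt/2} ((-iΔt W)^{j_k}/j_k!) e^{-iH_0Δt/2}, and let Û_n be the same sum restricted to tuples containing at most one index equal to 2. If H_0 is Hermitian and W is bounded, then ‖U_n − Û_n‖ ≤ (1+‖W‖Δt)^{n-1} · [ (1+‖W‖Δt+‖W‖²Δt²/2)^n/(1+‖W‖Δt)^{n-1} − (n/2)‖W‖²Δt² − ‖W‖Δt − 1 ]; in particular, with T = nΔt fixed, ‖U_n − Û_n‖ ≤ C Δt² for a constant C depending only on T and ‖W‖. -/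

import Mathlib

open Finset

private lemma sum_cons_split {n : ℕ} (G : (Fin (n + 1) → Fin 3) → ℝ) :
    ∑ j : Fin (n + 1) → Fin 3, G j
      = ∑ a : Fin 3, ∑ j : Fin n → Fin 3, G (Fin.cons a j) := by
  rw [← (Fin.consEquiv fun _ : Fin (n+1) => Fin 3).sum_comp G, Fintype.sum_prod_type]
  rfl

private lemma cnt_cons {n : ℕ} (a : Fin 3) (j : Fin n → Fin 3) :
    (Finset.univ.filter fun k : Fin (n+1) => (Fin.cons a j : Fin (n+1) → Fin 3) k = 2).card
      = (if a = 2 then 1 else 0) + (Finset.univ.filter fun k : Fin n => j k = 2).card := by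
  simp only [Finset.card_filter]
  rw [Fin.sum_univ_succ]
  simp [Fin.cons_zero, Fin.cons_succ]

private lemma prod_cons_mul {n : ℕ} (c : Fin 3 → ℝ) (a : Fin 3) (j : Fin n → Fin 3) :
    ∏ k : Fin (n+1), c ((Fin.cons a j : Fin (n+1) → Fin 3) k)
      = c a * ∏ k : Fin n, c (j k) := by
  rw [Fin.prod_univ_succ]
  simp [Fin.cons_zero, Fin.cons_succ]

private lemma ite_mul_pull {P : Prop} [Decidable P] (a x : ℝ) :
    (if P then a * x else 0) = a * (if P then x else 0) := by
  split <;> simp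

private lemma total_sum_eq (c : Fin 3 → ℝ) :
    ∀ n : ℕ, ∑ j : Fin n → Fin 3, ∏ k, c (j k) = (c 0 + c 1 + c 2) ^ n := by
  intro n
  induction n with
  | zero => simp
  | succ m ih =>
    rw [sum_cons_split]
    simp only [prod_cons_mul, ← Finset.mul_sum, ih, Fin.sum_univ_three]
    ring

private lemma P_sum_eq (c : Fin 3 → ℝ) :
    ∀ n : ℕ, (∑ j : Fin n → Fin 3,
        if (Finset.univ.filter fun k : Fin n => j k = 2).card = 0 then ∏ k, c (j k) else 0)
      = (c 0 + c 1) ^ n := by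
  intro n
  induction n with
  | zero => simp
  | succ m ih =>
    rw [sum_cons_split]
    simp only [cnt_cons, prod_cons_mul, Fin.sum_univ_three, Fin.reduceEq, if_true, if_false,
      zero_add, Nat.add_zero, one_ne_zero, ite_mul_pull, ← Finset.mul_sum, ih]
    simp only [Nat.add_eq_zero, one_ne_zero, false_and, if_false, Finset.sum_const_zero, mul_zero]
    ring

private lemma Q_rec (c : Fin 3 → ℝ) (m : ℕ) :
    (∑ j : Fin (m+1) → Fin 3,
        if (Finset.univ.filter fun k : Fin (m+1) => j k = 2).card ≤ 1 then ∏ k, c (j k) else 0)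
      = (c 0 + c 1) * (∑ j : Fin m → Fin 3,
          if (Finset.univ.filter fun k : Fin m => j k = 2).card ≤ 1 then ∏ k, c (j k) else 0)
        + c 2 * (∑ j : Fin m → Fin 3,
          if (Finset.univ.filter fun k : Fin m => j k = 2).card = 0 then ∏ k, c (j k) else 0) := by
  have h2 : ∀ s : ℕ, (1 + s ≤ 1) ↔ (s = 0) := by omega
  rw [sum_cons_split]
  simp only [cnt_cons, prod_cons_mul, Fin.sum_univ_three, Fin.reduceEq, if_true, if_false,
    zero_add, h2, ite_mul_pull, ← Finset.mul_sum]
  ring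

private lemma Q_sum_eq (c : Fin 3 → ℝ) :
    ∀ m : ℕ, (∑ j : Fin (m+1) → Fin 3,
        if (Finset.univ.filter fun k : Fin (m+1) => j k = 2).card ≤ 1 then ∏ k, c (j k) else 0)
      = (c 0 + c 1) ^ (m+1) + (m+1) * c 2 * (c 0 + c 1) ^ m := by
  intro m
  induction m with
  | zero =>
    rw [Q_rec]
    simp
    try ring
  | succ s ih =>
    rw [Q_rec, ih, P_sum_eq]
    push_cast
    ring

/-- Second-order truncation error of the discrete Dyson series: let `U_n` be the sum over
all `(j_1,…,j_n) ∈ {0,1,2}^n` of products of the factors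
`e^{-iH₀Δt/2}·((-iΔt W)^{j_k}/j_k!)·e^{-iH₀Δt/2}` (multiplied in order of decreasing
index), and let `Û_n` be the same sum restricted to tuples with at most one index equal
to `2`. If `H₀` is Hermitian and `W` bounded, then
`‖U_n − Û_n‖ ≤ (1+‖W‖Δt)^{n-1}·[(1+‖W‖Δt+‖W‖²Δt²/2)^n/(1+‖W‖Δt)^{n-1} − (n/2)‖W‖²Δt² − ‖W‖Δt − 1]`. -/
theorem second_order_dyson_truncation_error {E : Type*} [NormedAddCommGroup E]
    [InnerProductSpace ℂ E] [CompleteSpace E] (H₀ W : E →L[ℂ] E)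
    (hH₀ : IsSelfAdjoint H₀) (n : ℕ) (hn : 1 ≤ n) (Δt : ℝ) (hΔt : 0 < Δt) :
    let F : ℕ → (E →L[ℂ] E) := fun r =>
      NormedSpace.exp ((-Complex.I * (Δt / 2 : ℝ)) • H₀) *
        (((-Complex.I * (Δt : ℝ)) ^ r / (r.factorial : ℂ)) • W ^ r) *
        NormedSpace.exp ((-Complex.I * (Δt / 2 : ℝ)) • H₀)
    let U : E →L[ℂ] E :=
      ∑ j : Fin n → Fin 3, ((List.ofFn fun k : Fin n => F (j k)).reverse).prod
    let Uhat : E →L[ℂ] E :=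
      ∑ j ∈ Finset.univ.filter
          (fun j : Fin n → Fin 3 =>
            (Finset.univ.filter (fun k : Fin n => j k = 2)).card ≤ 1),
        ((List.ofFn fun k : Fin n => F (j k)).reverse).prod
    ‖U - Uhat‖ ≤ (1 + ‖W‖ * Δt) ^ (n - 1) *
        ((1 + ‖W‖ * Δt + ‖W‖ ^ 2 * Δt ^ 2 / 2) ^ n / (1 + ‖W‖ * Δt) ^ (n - 1) -
          (n / 2 : ℝ) * ‖W‖ ^ 2 * Δt ^ 2 - ‖W‖ * Δt - 1) := by
  intro F U Uhat
  set x : ℝ := ‖W‖ * Δt with hx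
  set y : ℝ := ‖W‖ ^ 2 * Δt ^ 2 / 2 with hy
  have hx0 : 0 ≤ x := mul_nonneg (norm_nonneg _) hΔt.le
  have hy0 : 0 ≤ y := by positivity
  set c : Fin 3 → ℝ := ![1, x, y] with hc
  have hc0 : c 0 = 1 := rfl
  have hc1 : c 1 = x := rfl
  have hc2 : c 2 = y := rfl
  have hcnn : ∀ r : Fin 3, 0 ≤ c r := by
    intro r; fin_cases r <;> simp [hc0, hc1, hc2] <;> assumption
  -- norm of the half-step exponential
  set u : E →L[ℂ] E := NormedSpace.exp ((-Complex.I * (Δt / 2 : ℝ)) • H₀) with hu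
  have hmem : ((-Complex.I * ((Δt / 2 : ℝ) : ℂ)) • H₀) ∈ skewAdjoint (E →L[ℂ] E) := by
    rw [skewAdjoint.mem_iff, star_smul, hH₀.star_eq, ← neg_smul]
    congr 1
    simp [Complex.ext_iff]
  have huni : u ∈ unitary (E →L[ℂ] E) := by
    let +nondep : NormedAlgebra ℚ (E →L[ℂ] E) := .restrictScalars ℚ ℂ (E →L[ℂ] E)
    exact NormedSpace.exp_mem_unitary_of_mem_skewAdjoint hmem
  have hsu : star u * u = 1 := (Unitary.mem_iff.mp huni).1
  have hexp : ‖u‖ ≤ 1 := by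
    have h1 : ‖u‖ * ‖u‖ = ‖star u * u‖ := (CStarRing.norm_star_mul_self).symm
    rw [hsu] at h1
    have h2 : ‖(1 : E →L[ℂ] E)‖ ≤ 1 := by
      rw [ContinuousLinearMap.one_def]; exact ContinuousLinearMap.norm_id_le
    nlinarith [norm_nonneg u]
  have h3 : ∀ a b d : E →L[ℂ] E, ‖a * b * d‖ ≤ ‖a‖ * ‖b‖ * ‖d‖ := fun a b d =>
    (norm_mul_le _ _).trans (mul_le_mul_of_nonneg_right (norm_mul_le a b) (norm_nonneg d))
  have hone : ‖(1 : E →L[ℂ] E)‖ ≤ 1 := by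
    rw [ContinuousLinearMap.one_def]; exact ContinuousLinearMap.norm_id_le
  have hz : ∀ r : ℕ, ‖((-Complex.I * (Δt : ℝ)) ^ r / (r.factorial : ℂ))‖
      = Δt ^ r / (r.factorial : ℝ) := by
    intro r
    rw [norm_div, norm_pow, norm_mul, norm_neg, Complex.norm_I, one_mul, Complex.norm_real,
      Real.norm_eq_abs, abs_of_pos hΔt, Complex.norm_natCast]
  have hF : ∀ r : Fin 3, ‖F (r : ℕ)‖ ≤ c r := by
    intro r
    have key : ∀ r : ℕ, ‖F r‖ ≤ ‖u‖ * (Δt ^ r / (r.factorial : ℝ) * ‖W ^ r‖) * ‖u‖ := by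
      intro r
      have := h3 u ((((-Complex.I * (Δt : ℝ)) ^ r / (r.factorial : ℂ))) • W ^ r) u
      rwa [norm_smul, hz] at this
    have hmul1 : ∀ b : ℝ, 0 ≤ b → ‖u‖ * b * ‖u‖ ≤ b := by
      intro b hb
      calc ‖u‖ * b * ‖u‖ ≤ 1 * b * 1 := by
            apply mul_le_mul (mul_le_mul hexp le_rfl hb (by linarith [norm_nonneg u])) hexp
              (norm_nonneg u)
            positivity
        _ = b := by ring
    fin_cases r
    · refine (key 0).trans ?_
      refine ((hmul1 _ (by positivity)).trans ?_)
      simpa [hc0] using hone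
    · refine (key 1).trans ((hmul1 _ (by positivity)).trans ?_)
      show Δt ^ 1 / ((Nat.factorial 1 : ℕ) : ℝ) * ‖W ^ 1‖ ≤ x
      rw [hx]
      simp [Nat.factorial, pow_one, mul_comm]
    · refine (key 2).trans ((hmul1 _ (by positivity)).trans ?_)
      have hW2 : ‖W ^ 2‖ ≤ ‖W‖ ^ 2 := norm_pow_le' W two_pos
      show Δt ^ 2 / ((Nat.factorial 2 : ℕ) : ℝ) * ‖W ^ 2‖ ≤ y
      have h2f : ((Nat.factorial 2 : ℕ) : ℝ) = 2 := by norm_num [Nat.factorial]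
      rw [h2f, hy]
      nlinarith [mul_nonneg (sub_nonneg.mpr hW2) (sq_nonneg Δt)]
  -- per-tuple bound
  have hterm : ∀ j : Fin n → Fin 3,
      ‖((List.ofFn fun k : Fin n => F ((j k : ℕ))).reverse).prod‖ ≤ ∏ k, c (j k) := by
    intro j
    have hne : (List.ofFn fun k : Fin n => F ((j k : ℕ))).reverse ≠ [] := by
      intro h
      have := congrArg List.length h
      simp at this
      omega
    refine (List.norm_prod_le' hne).trans ?_
    rw [List.map_reverse, List.prod_reverse, List.map_ofFn, List.prod_ofFn]
    exact Finset.prod_le_prod (fun k _ => norm_nonneg _) (fun k _ => hF (j k))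
  -- split the sum
  set p : (Fin n → Fin 3) → Prop :=
    fun j => (Finset.univ.filter (fun k : Fin n => j k = 2)).card ≤ 1 with hp
  have hUdef : Uhat + (∑ j ∈ Finset.univ.filter (fun j => ¬ p j),
      ((List.ofFn fun k : Fin n => F ((j k : ℕ))).reverse).prod) = U :=
    Finset.sum_filter_add_sum_filter_not _ _ _
  obtain ⟨m, rfl⟩ : ∃ m, n = m + 1 := ⟨n - 1, by omega⟩
  have h1x : (0:ℝ) < 1 + x := by linarith
  calc ‖U - Uhat‖
      = ‖∑ j ∈ Finset.univ.filter (fun j => ¬ p j),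
          ((List.ofFn fun k : Fin (m+1) => F ((j k : ℕ))).reverse).prod‖ := by
        rw [← hUdef, add_sub_cancel_left]
    _ ≤ ∑ j ∈ Finset.univ.filter (fun j => ¬ p j),
          ‖((List.ofFn fun k : Fin (m+1) => F ((j k : ℕ))).reverse).prod‖ :=
        norm_sum_le _ _
    _ ≤ ∑ j ∈ Finset.univ.filter (fun j => ¬ p j), ∏ k, c (j k) :=
        Finset.sum_le_sum (fun j _ => hterm j)
    _ = (1 + x + y) ^ (m+1) - ((1 + x) ^ (m+1) + (m+1) * y * (1 + x) ^ m) := by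
        have hadd := Finset.sum_filter_add_sum_filter_not Finset.univ p
          (fun j : Fin (m+1) → Fin 3 => ∏ k, c (j k))
        have htot := total_sum_eq c (m+1)
        have hQ : ∑ j ∈ Finset.univ.filter p, ∏ k, c (j k)
            = (1 + x) ^ (m+1) + (m+1) * y * (1 + x) ^ m := by
          rw [Finset.sum_filter]
          rw [Q_sum_eq c m]
          rw [hc0, hc1, hc2]
        rw [hc0, hc1, hc2] at htot
        rw [hQ] at hadd
        rw [← htot]
        linarith
    _ = (1 + x) ^ ((m+1) - 1) *
        ((1 + x + y) ^ (m+1) / (1 + x) ^ ((m+1) - 1) -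
          (((m+1 : ℕ)) / 2 : ℝ) * ‖W‖ ^ 2 * Δt ^ 2 - ‖W‖ * Δt - 1) := by
        simp only [Nat.add_sub_cancel]
        rw [mul_sub, mul_sub, mul_sub, mul_div_cancel₀ _ (pow_ne_zero m h1x.ne')]
        simp only [hx, hy]
        push_cast
        ring
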